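/- Let k₀ ≥ 1 be an integer and let S be the numerical semigroup (additive submonoid of ℕ) generated by the set A = {2(k₀+i)+1 : 0 ≤ i ≤ k₀−1} ∪ {4k₀+i+1 : 0 ≤ i ≤ 2k₀}. Then: (a) S = {0} ∪ A ∪ {n ∈ ℕ : n ≥ 6k₀+1}; and (b) for every integer l ≥ 1, every s ∈ S with s ≤ l·(6k₀+1) can be written as an ℕ-linear combination of the generators in A whose coefficients sum to at most l. -/

import Mathlib

private def Stmt18Rep (k₀ s m : ℕ) : Prop :=
  ∃ c : Fin k₀ → ℕ, ∃ e : Fin (2 * k₀ + 1) → ℕ,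
    s = (∑ i, c i * (2 * (k₀ + (i : ℕ)) + 1)) +
        (∑ i, e i * (4 * k₀ + (i : ℕ) + 1)) ∧
    (∑ i, c i) + (∑ i, e i) ≤ m

private lemma rep_zero (k₀ m : ℕ) : Stmt18Rep k₀ 0 m := ⟨0, 0, by simp, by simp⟩

private lemma rep_mono {k₀ s m n : ℕ} (h : m ≤ n) : Stmt18Rep k₀ s m → Stmt18Rep k₀ s n := by
  rintro ⟨c, e, h1, h2⟩; exact ⟨c, e, h1, h2.trans h⟩

private lemma rep_add {k₀ s t m n : ℕ} (hs : Stmt18Rep k₀ s m) (ht : Stmt18Rep k₀ t n) :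
    Stmt18Rep k₀ (s + t) (m + n) := by
  obtain ⟨c, e, h1, h2⟩ := hs
  obtain ⟨c', e', h1', h2'⟩ := ht
  refine ⟨c + c', e + e', ?_, ?_⟩
  · simp only [Pi.add_apply, add_mul, Finset.sum_add_distrib]
    omega
  · simp only [Pi.add_apply, Finset.sum_add_distrib]
    omega

private lemma rep_gen1 {k₀ i : ℕ} (hi : i < k₀) : Stmt18Rep k₀ (2 * (k₀ + i) + 1) 1 := by
  refine ⟨Pi.single ⟨i, hi⟩ 1, 0, ?_, ?_⟩
  · simp [Pi.single_apply]
  · simp [Pi.single_apply]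

private lemma rep_gen2 {k₀ i : ℕ} (hi : i ≤ 2 * k₀) : Stmt18Rep k₀ (4 * k₀ + i + 1) 1 := by
  refine ⟨0, Pi.single ⟨i, by omega⟩ 1, ?_, ?_⟩
  · simp [Pi.single_apply]
  · simp [Pi.single_apply]

private lemma rep_eq {k₀ s t m : ℕ} (h : s = t) (hs : Stmt18Rep k₀ s m) : Stmt18Rep k₀ t m :=
  h ▸ hs

/-- target-set membership predicate -/
private def T18 (k₀ n : ℕ) : Prop :=
  n = 0 ∨ (∃ i : ℕ, i ≤ k₀ - 1 ∧ n = 2 * (k₀ + i) + 1) ∨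
  (∃ i : ℕ, i ≤ 2 * k₀ ∧ n = 4 * k₀ + i + 1) ∨ 6 * k₀ + 1 ≤ n

private lemma key (k₀ : ℕ) (hk : 1 ≤ k₀) :
    ∀ l : ℕ, 1 ≤ l → ∀ s : ℕ, T18 k₀ s → s ≤ l * (6 * k₀ + 1) → Stmt18Rep k₀ s l := by
  intro l
  induction l with
  | zero => omega
  | succ l ih =>
    intro _ s hT hs
    rcases Nat.eq_zero_or_pos l with rfl | hl
    · -- base case l + 1 = 1
      rcases hT with rfl | ⟨i, hi, rfl⟩ | ⟨i, hi, rfl⟩ | h6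
      · exact rep_zero _ _
      · exact rep_gen1 (by omega)
      · exact rep_gen2 hi
      · have : s = 4 * k₀ + 2 * k₀ + 1 := by omega
        exact rep_eq (by omega) (rep_gen2 (le_refl (2 * k₀)))
    · -- inductive step, l ≥ 1
      by_cases hsl : s ≤ l * (6 * k₀ + 1)
      · exact rep_mono (by omega) (ih hl s hT hsl)
      · push_neg at hsl
        have hl6 : 6 * k₀ + 1 ≤ l * (6 * k₀ + 1) := Nat.le_mul_of_pos_left _ hl
        by_cases hbig : 12 * k₀ + 2 ≤ s
        · -- subtract the generator 6k₀+1
          have ht : T18 k₀ (s - (6 * k₀ + 1)) := Or.inr (Or.inr (Or.inr (by omega)))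
          have hmul : (l + 1) * (6 * k₀ + 1) = l * (6 * k₀ + 1) + (6 * k₀ + 1) := by ring
          have hts : s - (6 * k₀ + 1) ≤ l * (6 * k₀ + 1) := by omega
          have hg : Stmt18Rep k₀ (4 * k₀ + 2 * k₀ + 1) 1 := rep_gen2 (le_refl (2 * k₀))
          have := rep_add hg (ih hl _ ht hts)
          exact rep_mono (by omega) (rep_eq (by omega) this)
        · -- then l = 1 and 6k₀+2 ≤ s ≤ 12k₀+1
          push_neg at hbig
          have hl1 : l = 1 := by
            by_contra h
            have h2 : 2 ≤ l := by omega
            have : 2 * (6 * k₀ + 1) ≤ l * (6 * k₀ + 1) := Nat.mul_le_mul_right _ h2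
            omega
          subst hl1
          have hrange : 6 * k₀ + 2 ≤ s ∧ s ≤ 12 * k₀ + 1 := by omega
          by_cases h1 : s ≤ 8 * k₀ + 2
          · have ha : Stmt18Rep k₀ (2 * (k₀ + 0) + 1) 1 := @rep_gen1 k₀ 0 (by omega)
            have hb : Stmt18Rep k₀ (4 * k₀ + (s - (6 * k₀ + 2)) + 1) 1 := @rep_gen2 k₀ (s - (6 * k₀ + 2)) (by omega)
            exact rep_eq (by omega) (rep_add ha hb)
          · by_cases h2 : s ≤ 10 * k₀ + 2
            · have ha : Stmt18Rep k₀ (4 * k₀ + 0 + 1) 1 := @rep_gen2 k₀ 0 (by omega)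
              have hb : Stmt18Rep k₀ (4 * k₀ + (s - (8 * k₀ + 2)) + 1) 1 := @rep_gen2 k₀ (s - (8 * k₀ + 2)) (by omega)
              exact rep_eq (by omega) (rep_add ha hb)
            · have ha : Stmt18Rep k₀ (4 * k₀ + 2 * k₀ + 1) 1 := rep_gen2 (le_refl _)
              have hb : Stmt18Rep k₀ (4 * k₀ + (s - (10 * k₀ + 2)) + 1) 1 := @rep_gen2 k₀ (s - (10 * k₀ + 2)) (by omega)
              exact rep_eq (by omega) (rep_add ha hb)

private lemma mem_closure_of_rep {k₀ : ℕ} {A : Set ℕ}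
    (hA : A = {n : ℕ | ∃ i : ℕ, i ≤ k₀ - 1 ∧ n = 2 * (k₀ + i) + 1} ∪
              {n : ℕ | ∃ i : ℕ, i ≤ 2 * k₀ ∧ n = 4 * k₀ + i + 1})
    {s m : ℕ} (h : Stmt18Rep k₀ s m) : s ∈ AddSubmonoid.closure A := by
  obtain ⟨c, e, rfl, -⟩ := h
  refine AddSubmonoid.add_mem _ (AddSubmonoid.sum_mem _ fun i _ => ?_)
    (AddSubmonoid.sum_mem _ fun i _ => ?_)
  · rw [← smul_eq_mul (α := ℕ)]
    refine nsmul_mem (AddSubmonoid.subset_closure ?_) _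
    rw [hA]
    exact Set.mem_union_left _ ⟨(i : ℕ), by have := i.isLt; omega, rfl⟩
  · rw [← smul_eq_mul (α := ℕ)]
    refine nsmul_mem (AddSubmonoid.subset_closure ?_) _
    rw [hA]
    exact Set.mem_union_right _ ⟨(i : ℕ), by have := i.isLt; omega, rfl⟩

private lemma closure_sub {k₀ : ℕ} (_hk : 1 ≤ k₀) {A : Set ℕ}
    (hA : A = {n : ℕ | ∃ i : ℕ, i ≤ k₀ - 1 ∧ n = 2 * (k₀ + i) + 1} ∪
              {n : ℕ | ∃ i : ℕ, i ≤ 2 * k₀ ∧ n = 4 * k₀ + i + 1}) :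
    ∀ s ∈ AddSubmonoid.closure A, T18 k₀ s := by
  intro s hs
  induction hs using AddSubmonoid.closure_induction with
  | mem x hx =>
    rw [hA] at hx
    rcases hx with ⟨i, hi, rfl⟩ | ⟨i, hi, rfl⟩
    · exact Or.inr (Or.inl ⟨i, hi, rfl⟩)
    · exact Or.inr (Or.inr (Or.inl ⟨i, hi, rfl⟩))
  | zero => exact Or.inl rfl
  | add x y hx hy px py =>
    have bx : x = 0 ∨ (2 * k₀ + 1 ≤ x ∧ x ≤ 6 * k₀ + 1) ∨ 6 * k₀ + 1 ≤ x := by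
      rcases px with h | ⟨i, hi, rfl⟩ | ⟨i, hi, rfl⟩ | h <;> omega
    have by' : y = 0 ∨ (2 * k₀ + 1 ≤ y ∧ y ≤ 6 * k₀ + 1) ∨ 6 * k₀ + 1 ≤ y := by
      rcases py with h | ⟨i, hi, rfl⟩ | ⟨i, hi, rfl⟩ | h <;> omega
    rcases bx with rfl | hx2 | hx2
    · simpa using py
    all_goals rcases by' with rfl | hy2 | hy2
    · simpa using px
    · by_cases hb : 6 * k₀ + 1 ≤ x + y
      · exact Or.inr (Or.inr (Or.inr hb))
      · exact Or.inr (Or.inr (Or.inl ⟨x + y - (4 * k₀ + 1), by omega, by omega⟩))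
    · exact Or.inr (Or.inr (Or.inr (by omega)))
    · exact Or.inr (Or.inr (Or.inr (by omega)))
    · exact Or.inr (Or.inr (Or.inr (by omega)))
    · exact Or.inr (Or.inr (Or.inr (by omega)))

theorem stmt18 (k₀ : ℕ) (hk₀ : 1 ≤ k₀)
    (A : Set ℕ)
    (hA : A = {n : ℕ | ∃ i : ℕ, i ≤ k₀ - 1 ∧ n = 2 * (k₀ + i) + 1} ∪
              {n : ℕ | ∃ i : ℕ, i ≤ 2 * k₀ ∧ n = 4 * k₀ + i + 1}) :
    ((AddSubmonoid.closure A : AddSubmonoid ℕ) : Set ℕ)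
        = {0} ∪ A ∪ {n : ℕ | 6 * k₀ + 1 ≤ n} ∧
    ∀ l : ℕ, 1 ≤ l → ∀ s : ℕ, s ∈ AddSubmonoid.closure A → s ≤ l * (6 * k₀ + 1) →
      ∃ c : Fin k₀ → ℕ, ∃ e : Fin (2 * k₀ + 1) → ℕ,
        s = (∑ i, c i * (2 * (k₀ + (i : ℕ)) + 1)) +
            (∑ i, e i * (4 * k₀ + (i : ℕ) + 1)) ∧
        (∑ i, c i) + (∑ i, e i) ≤ l := by
  constructor
  · ext n
    simp only [Set.mem_union, Set.mem_singleton_iff, Set.mem_setOf_eq, SetLike.mem_coe]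
    constructor
    · intro hn
      have := closure_sub hk₀ hA n hn
      rcases this with h | h | h | h
      · exact Or.inl (Or.inl h)
      · exact Or.inl (Or.inr (by rw [hA]; exact Set.mem_union_left _ h))
      · exact Or.inl (Or.inr (by rw [hA]; exact Set.mem_union_right _ h))
      · exact Or.inr h
    · rintro ((rfl | hn) | hn)
      · exact AddSubmonoid.zero_mem _
      · exact AddSubmonoid.subset_closure hn
      · have h1 : 1 ≤ n := by omega
        have hrep : Stmt18Rep k₀ n n :=
          key k₀ hk₀ n h1 n (Or.inr (Or.inr (Or.inr hn)))
            (by calc n = n * 1 := (mul_one n).symm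
                  _ ≤ n * (6 * k₀ + 1) := Nat.mul_le_mul_left n (by omega))
        exact mem_closure_of_rep hA hrep
  · intro l hl s hsc hsl
    exact key k₀ hk₀ l hl s (closure_sub hk₀ hA s hsc) hsl
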